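/- Let n be even and let A be an abelian group of order n such that, in the degree-n action of G = D(A) on the cosets of H = ⟨x⟩, the subgroup A is not contained in Alt(n). Then there is no inverse-closed subset C ⊆ Der(G) with 2 < α(Cay(G, C)) < 4; in particular, no Cayley subgraph Cay(G, C) of the derangement graph has independence number 3. -/

import Mathlib

/-- The Cayley graph of a group `Γ` with (inverse-closed) connection set `C`:
`g` and `h` are adjacent iff they are distinct and `g⁻¹ * h ∈ C` (symmetrized). -/
def cayley (Γ : Type*) [Group Γ] (C : Set Γ) : SimpleGraph Γ where
  Adj g h := g ≠ h ∧ g⁻¹ * h ∈ C ∧ h⁻¹ * g ∈ C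
  symm := ⟨fun _ _ ⟨hne, h1, h2⟩ => ⟨hne.symm, h2, h1⟩⟩
  loopless := ⟨fun _ ⟨hne, _⟩ => hne rfl⟩

/-- A set of vertices of a graph is independent if its elements are pairwise non-adjacent. -/
def IsIndepSet {V : Type*} (X : SimpleGraph V) (s : Set V) : Prop :=
  s.Pairwise fun a b => ¬ X.Adj a b

/-- The independence number of a graph: the maximum size of an independent set. -/
noncomputable def indepNum {V : Type*} (X : SimpleGraph V) : ℕ :=
  sSup {k | ∃ s : Finset V, IsIndepSet X ↑s ∧ s.card = k}

/-- The set of derangements of a permutation group `G ≤ Sym(n)`: the elements of `G`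
fixing no point of `{1,…,n}`. -/
def der {n : ℕ} (G : Subgroup (Equiv.Perm (Fin n))) : Set G :=
  {σ : G | ∀ i : Fin n, (σ : Equiv.Perm (Fin n)) i ≠ i}
/-- The set of derangements of the action of `G` on the left cosets of `H`:
the elements of `G` fixing no coset. -/
def derQ (G : Type*) [Group G] (H : Subgroup G) : Set G :=
  {g : G | ∀ c : G ⧸ H, g • c ≠ c}

section aux
open Subgroup Equiv

private 

lemma sign_mulLeft_cyclic {B : Type*} [Group B] [Fintype B] [DecidableEq B] (c : B) :
    Equiv.Perm.sign (Equiv.mulLeft (⟨c, Subgroup.mem_zpowers c⟩ : Subgroup.zpowers c) :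
        Equiv.Perm (Subgroup.zpowers c)) = (-1 : ℤˣ) ^ (orderOf c - 1) := by
  classical
  have hd : 0 < orderOf c := orderOf_pos c
  obtain ⟨m, hm⟩ : ∃ m, orderOf c = m + 1 := ⟨orderOf c - 1, (Nat.succ_pred_eq_of_pos hd).symm⟩
  obtain ⟨e3, he3⟩ : ∃ e : Fin (m + 1) ≃ Subgroup.zpowers c,
      ∀ i : Fin (m + 1), (e i : B) = c ^ (i : ℕ) :=
    ⟨(finCongr hm.symm).trans (finEquivZPowers (isOfFinOrder_of_finite c)), fun i => by
      rfl⟩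
  have key : ∀ i : Fin (m + 1), e3 (finRotate (m + 1) i) =
      (Equiv.mulLeft (⟨c, Subgroup.mem_zpowers c⟩ : Subgroup.zpowers c)) (e3 i) := by
    intro i
    apply Subtype.ext
    rw [he3]
    simp only [Equiv.coe_mulLeft, Subgroup.coe_mul, he3]
    rw [finRotate_succ_apply]
    have h1 : ((i + 1 : Fin (m + 1)) : ℕ) = ((i : ℕ) + 1) % (m + 1) := by
      simp [Fin.add_def]
    have h2 := pow_mod_orderOf c ((i : ℕ) + 1)
    rw [hm] at h2
    rw [h1, h2, pow_succ']
  have := Equiv.Perm.sign_eq_sign_of_equiv (finRotate (m + 1)) _ e3 key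
  rw [← this, sign_finRotate, hm]

lemma sign_mulLeft_formula {B : Type*} [CommGroup B] [Fintype B] [DecidableEq B] (c : B) :
    Equiv.Perm.sign (Equiv.mulLeft c) =
      ((-1 : ℤˣ) ^ (orderOf c - 1)) ^ ((Subgroup.zpowers c).index) := by
  classical
  set Z := Subgroup.zpowers c with hZdef
  letI : Fintype (B ⧸ Z) := Fintype.ofFinite _
  -- the explicit decomposition equivalence
  have hmem : ∀ b : B, (Quotient.out (QuotientGroup.mk (s := Z) b))⁻¹ * b ∈ Z := by
    intro b
    rw [← QuotientGroup.eq]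
    exact QuotientGroup.out_eq' _
  set e2 : B ≃ (B ⧸ Z) × Z :=
    { toFun := fun b => (QuotientGroup.mk b, ⟨(Quotient.out (QuotientGroup.mk (s := Z) b))⁻¹ * b, hmem b⟩)
      invFun := fun p => (Quotient.out p.1) * (p.2 : B)
      left_inv := fun b => by group
      right_inv := fun p => by
        have h1 : QuotientGroup.mk (s := Z) ((Quotient.out p.1) * (p.2 : B)) = p.1 := by
          rw [QuotientGroup.mk_mul]
          rw [QuotientGroup.eq_one_iff (p.2 : B) |>.mpr p.2.2]
          rw [mul_one, QuotientGroup.out_eq']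
        ext
        · exact h1
        · show ((Quotient.out (QuotientGroup.mk (s := Z) _))⁻¹ * _ : B) = (p.2 : B)
          rw [h1]
          group } with he2def
  have key : ∀ b : B, e2 (c * b) =
      (Equiv.prodCongrRight fun _ : B ⧸ Z =>
        (Equiv.mulLeft (⟨c, Subgroup.mem_zpowers c⟩ : Z))) (e2 b) := by
    intro b
    have h1 : QuotientGroup.mk (s := Z) (c * b) = QuotientGroup.mk b := by
      rw [QuotientGroup.eq]
      have hc : c⁻¹ ∈ Z := Subgroup.inv_mem Z (Subgroup.mem_zpowers c)
      have : (c * b)⁻¹ * b = c⁻¹ := by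
        rw [mul_inv_rev, mul_assoc, mul_comm c⁻¹ b]
        group
      rwa [this]
    apply Prod.ext
    · exact h1
    · apply Subtype.ext
      show ((Quotient.out (QuotientGroup.mk (s := Z) (c * b)))⁻¹ * (c * b) : B)
        = c * ((Quotient.out (QuotientGroup.mk (s := Z) b))⁻¹ * b)
      rw [h1]
      exact mul_left_comm _ c b
  have := Equiv.Perm.sign_eq_sign_of_equiv (Equiv.mulLeft c) _ e2 key
  rw [this, Equiv.Perm.sign_prodCongrRight]
  rw [Finset.prod_const, sign_mulLeft_cyclic c]
  rw [Finset.card_univ, ← Nat.card_eq_fintype_card, ← Subgroup.index_eq_card]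

private 
lemma sq_index_two {B : Type*} [CommGroup B] [Fintype B] (a₀ : B)
    (hodd : Odd ((Subgroup.zpowers a₀).index)) (heven : Even (orderOf a₀))
    {u v : B} (hu : ∀ t : B, t * t ≠ u) (hv : ∀ t : B, t * t ≠ v) :
    ∃ t : B, t * t = u * v := by
  classical
  set f : B →* B := powMonoidHom 2 with hf
  have hfap : ∀ t : B, f t = t * t := fun t => by simp [hf, powMonoidHom_apply, pow_two]
  -- Step A : ker f ≤ zpowers a₀
  have kerle : f.ker ≤ Subgroup.zpowers a₀ := by
    intro z hz
    by_contra hz'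
    have hz1 : (z : B ⧸ Subgroup.zpowers a₀) ≠ 1 := by
      rwa [Ne, QuotientGroup.eq_one_iff]
    have hzsq : (z : B ⧸ Subgroup.zpowers a₀) ^ 2 = 1 := by
      have : z ^ 2 = 1 := by rw [pow_two, ← hfap]; exact hz
      rw [← QuotientGroup.mk_pow, this, QuotientGroup.mk_one]
    have hdvd : orderOf (z : B ⧸ Subgroup.zpowers a₀) ∣ 2 := orderOf_dvd_of_pow_eq_one hzsq
    have h2 : orderOf (z : B ⧸ Subgroup.zpowers a₀) = 2 := by
      rcases (Nat.prime_two).eq_one_or_self_of_dvd _ hdvd with h | h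
      · exact absurd (orderOf_eq_one_iff.mp h) hz1
      · exact h
    have : (2 : ℕ) ∣ (Subgroup.zpowers a₀).index := by
      rw [Subgroup.index_eq_card]
      exact h2 ▸ orderOf_dvd_natCard _
    rw [← Nat.not_even_iff_odd] at hodd
    exact hodd (even_iff_two_dvd.mpr this)
  -- Step B : ker f ≤ zpowers ι with ι := a₀ ^ e, orderOf a₀ = e + e
  obtain ⟨e, he⟩ := heven
  have kerle2 : f.ker ≤ Subgroup.zpowers (a₀ ^ e) := by
    intro z hz
    obtain ⟨k, hk⟩ := Subgroup.mem_zpowers_iff.mp (kerle hz)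
    have hz2 : a₀ ^ (2 * k) = 1 := by
      have hzz : z ^ (2:ℤ) = 1 := by
        rw [zpow_two, ← hfap]; exact hz
      rw [mul_comm, zpow_mul, hk, hzz]
    have hdvd : ((orderOf a₀ : ℤ)) ∣ 2 * k := orderOf_dvd_iff_zpow_eq_one.mpr hz2
    have hek : (e : ℤ) ∣ k := by
      have : (2 * e : ℤ) ∣ 2 * k := by
        have : ((e + e : ℕ) : ℤ) = 2 * e := by push_cast; ring
        rwa [he, this] at hdvd
      exact (mul_dvd_mul_iff_left (by norm_num : (2:ℤ) ≠ 0)).mp this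
    obtain ⟨j, hj⟩ := hek
    refine Subgroup.mem_zpowers_iff.mpr ⟨j, ?_⟩
    rw [← zpow_natCast a₀ e, ← zpow_mul, ← hj, hk]
  -- Step C : Nat.card ker ≤ 2
  have hcard : Nat.card f.ker ∣ 2 := by
    have h1 : Nat.card f.ker ∣ Nat.card (Subgroup.zpowers (a₀ ^ e)) :=
      Subgroup.card_dvd_of_le kerle2
    rw [Nat.card_zpowers] at h1
    refine h1.trans (orderOf_dvd_of_pow_eq_one ?_)
    rw [← pow_mul, show e * 2 = e + e by ring, ← he, pow_orderOf_eq_one]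
  -- Step D : index of range = card of kernel
  have hindex : f.range.index = Nat.card f.ker := by
    have h1 : Nat.card f.range * f.range.index = Nat.card B := Subgroup.card_mul_index _
    have h2 : Nat.card f.ker * f.ker.index = Nat.card B := Subgroup.card_mul_index _
    have h3 : Nat.card f.range = f.ker.index := by
      rw [Subgroup.index_eq_card]
      exact (Nat.card_congr (QuotientGroup.quotientKerEquivRange f).toEquiv).symm
    have hkerpos : 0 < f.ker.index := Nat.pos_of_ne_zero Subgroup.index_ne_zero_of_finite
    rw [h3] at h1
    rw [mul_comm] at h2
    exact Nat.eq_of_mul_eq_mul_left hkerpos (h1.trans h2.symm)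
  -- Step E : index = 2 and conclude
  have hunr : u ∉ f.range := by
    intro hur
    obtain ⟨t, ht⟩ := hur
    exact hu t (by rw [← hfap]; exact ht)
  have hvnr : v ∉ f.range := by
    intro hvr
    obtain ⟨t, ht⟩ := hvr
    exact hv t (by rw [← hfap]; exact ht)
  have hne1 : f.range.index ≠ 1 := by
    intro h
    exact hunr (Subgroup.index_eq_one.mp h ▸ Subgroup.mem_top u)
  have hidx2 : f.range.index = 2 := by
    rw [hindex] at hne1 ⊢
    rcases (Nat.prime_two).eq_one_or_self_of_dvd _ hcard with h | h
    · exact absurd h hne1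
    · exact h
  have := (Subgroup.mul_mem_iff_of_index_two hidx2 (a := u) (b := v)).mpr
    (iff_of_false hunr hvnr)
  obtain ⟨t, ht⟩ := this
  exact ⟨t, by rw [← hfap]; exact ht⟩

end aux

section helpers

variable {G : Type*} [Group G] [Fintype G] (C : Set G)

private lemma nadjL {u w : G} (h : u⁻¹ * w ∉ C) : ¬ (cayley G C).Adj u w :=
  fun ⟨_, h1, _⟩ => h h1

private lemma nadjR {u w : G} (h : u⁻¹ * w ∉ C) : ¬ (cayley G C).Adj w u :=
  fun ⟨_, _, h2⟩ => h h2

private lemma indep_bddAbove :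
    BddAbove {k | ∃ s : Finset G, IsIndepSet (cayley G C) ↑s ∧ s.card = k} :=
  ⟨Fintype.card G, fun _ ⟨s, _, hc⟩ => hc ▸ Finset.card_le_univ s⟩

private lemma four_le_indepNum {v₁ v₂ v₃ v₄ : G}
    (h12 : v₁ ≠ v₂) (h13 : v₁ ≠ v₃) (h14 : v₁ ≠ v₄)
    (h23 : v₂ ≠ v₃) (h24 : v₂ ≠ v₄) (h34 : v₃ ≠ v₄)
    (c12 : v₁⁻¹ * v₂ ∉ C) (c13 : v₁⁻¹ * v₃ ∉ C) (c14 : v₁⁻¹ * v₄ ∉ C)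
    (c23 : v₂⁻¹ * v₃ ∉ C) (c24 : v₂⁻¹ * v₄ ∉ C) (c34 : v₃⁻¹ * v₄ ∉ C) :
    4 ≤ indepNum (cayley G C) := by
  classical
  apply le_csSup (indep_bddAbove C)
  refine ⟨{v₁, v₂, v₃, v₄}, ?_, ?_⟩
  · intro a ha b hb hne
    simp only [Finset.coe_insert, Set.mem_insert_iff, Finset.coe_singleton,
      Set.mem_singleton_iff] at ha hb
    rcases ha with rfl | rfl | rfl | rfl <;> rcases hb with rfl | rfl | rfl | rfl <;>
      first
        | exact absurd rfl hne
        | exact nadjL C c12 | exact nadjR C c12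
        | exact nadjL C c13 | exact nadjR C c13
        | exact nadjL C c14 | exact nadjR C c14
        | exact nadjL C c23 | exact nadjR C c23
        | exact nadjL C c24 | exact nadjR C c24
        | exact nadjL C c34 | exact nadjR C c34
  · rw [Finset.card_insert_of_notMem (by simp [h12, h13, h14]),
      Finset.card_insert_of_notMem (by simp [h23, h24]),
      Finset.card_insert_of_notMem (by simp [h34]), Finset.card_singleton]

private lemma exists_indep_triple (h2 : 2 < indepNum (cayley G C)) :
    ∃ g h k : G, g ≠ h ∧ g ≠ k ∧ h ≠ k ∧ ¬ (cayley G C).Adj g h ∧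
      ¬ (cayley G C).Adj g k ∧ ¬ (cayley G C).Adj h k := by
  classical
  have hne : {k | ∃ s : Finset G, IsIndepSet (cayley G C) ↑s ∧ s.card = k}.Nonempty :=
    ⟨0, ∅, by simp [IsIndepSet], Finset.card_empty⟩
  have hmem := Nat.sSup_mem hne (indep_bddAbove C)
  obtain ⟨s, hs, hcard⟩ := hmem
  have h3 : 2 < s.card := by rw [hcard]; exact h2
  have h0 : 0 < s.card := by omega
  obtain ⟨g, hg⟩ := Finset.card_pos.mp h0
  have h4 : 0 < (s.erase g).card := by rw [Finset.card_erase_of_mem hg]; omega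
  obtain ⟨h, hh⟩ := Finset.card_pos.mp h4
  have h5 : 0 < ((s.erase g).erase h).card := by
    rw [Finset.card_erase_of_mem hh, Finset.card_erase_of_mem hg]; omega
  obtain ⟨k, hk⟩ := Finset.card_pos.mp h5
  have hhs : h ∈ s := Finset.mem_of_mem_erase hh
  have hks : k ∈ s := Finset.mem_of_mem_erase (Finset.mem_of_mem_erase hk)
  have hgh : g ≠ h := (Finset.ne_of_mem_erase hh).symm
  have hhk : h ≠ k := (Finset.ne_of_mem_erase hk).symm
  have hgk : g ≠ k := (Finset.ne_of_mem_erase (Finset.mem_of_mem_erase hk)).symm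
  exact ⟨g, h, k, hgh, hgk, hhk,
    hs (by simpa using hg) (by simpa using hhs) hgh,
    hs (by simpa using hg) (by simpa using hks) hgk,
    hs (by simpa using hhs) (by simpa using hks) hhk⟩

end helpers

/-- Let `n` be even, `A` abelian of order `n`, and `G = D(A)` (presented
abstractly), acting on the `n` left cosets of `H = ⟨x⟩`; suppose the permutations of the
cosets induced by `A` include odd ones (`A ⊄ Alt(n)`). Then no inverse-closed
`C ⊆ Der(G)` gives `2 < α(Cay(G, C)) < 4`; in particular no Cayley subgraph of the
derangement graph has independence number 3. -/
theorem stmt_15 {G : Type*} [Group G] [Fintype G]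
    (A : Subgroup G) (hcomm : ∀ a ∈ A, ∀ b ∈ A, a * b = b * a)
    (hEven : Even (Nat.card A))
    (x : G) (hx2 : x ^ 2 = 1) (hxA : x ∉ A) (hindex : A.index = 2)
    (hconj : ∀ a ∈ A, x * a * x = a⁻¹)
    [Fintype (G ⧸ Subgroup.zpowers x)] [DecidableEq (G ⧸ Subgroup.zpowers x)]
    (hAodd : ∃ a ∈ A,
      Equiv.Perm.sign (MulAction.toPermHom G (G ⧸ Subgroup.zpowers x) a) = -1) :
    ¬ ∃ C : Set G, C ⊆ derQ G (Subgroup.zpowers x) ∧ (∀ c ∈ C, c⁻¹ ∈ C) ∧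
        2 < indepNum (cayley G C) ∧ indepNum (cayley G C) < 4 := by
  rintro ⟨C, hCder, hCinv, h2, h4⟩
  classical
  -- ## basic facts about x and A
  have hxx : x * x = 1 := by rw [← pow_two]; exact hx2
  have hxinv : x⁻¹ = x := by rw [inv_eq_iff_mul_eq_one]; exact hxx
  have hx1 : x ≠ 1 := fun h => hxA (h ▸ A.one_mem)
  have hrel : ∀ a ∈ A, x * a = a⁻¹ * x := by
    intro a ha
    have h := hconj a ha
    calc x * a = (x * a * x) * x := by rw [mul_assoc, mul_assoc, hxx, mul_one]
    _ = a⁻¹ * x := by rw [h]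
  have hrel2 : ∀ a ∈ A, a * x = x * a⁻¹ := by
    intro a ha
    have h := hrel a⁻¹ (A.inv_mem ha)
    rw [inv_inv] at h
    exact h.symm
  have hmulAA : ∀ {u v : G}, u ∉ A → v ∉ A → u * v ∈ A := fun hu hv =>
    (Subgroup.mul_mem_iff_of_index_two hindex).mpr (iff_of_false hu hv)
  have hmulA' : ∀ {u v : G}, u ∉ A → v ∈ A → u * v ∉ A := fun hu hv h =>
    hu (((Subgroup.mul_mem_iff_of_index_two hindex).mp h).mpr hv)
  have hinvA : ∀ {u : G}, u ∉ A → u⁻¹ ∉ A := fun hu h => hu (by simpa using A.inv_mem h)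
  have hinvol : ∀ p : G, p ∉ A → p * p = 1 := by
    intro p hp
    have ha : x * p ∈ A := hmulAA hxA hp
    have hp' : p = x * (x * p) := by rw [← mul_assoc, hxx, one_mul]
    calc p * p = (x * (x * p)) * (x * (x * p)) := by rw [← hp']
    _ = x * (((x * p) * x) * (x * p)) := by group
    _ = x * ((x * (x * p)⁻¹) * (x * p)) := by rw [hrel2 _ ha]
    _ = x * x := by group
    _ = 1 := hxx
  -- ## non-derangements of the form x * (square)
  have nd : ∀ t ∈ A, x * (t * t) ∉ derQ G (Subgroup.zpowers x) := by
    intro t ht hD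
    apply hD (QuotientGroup.mk t⁻¹)
    show (x * (t * t)) • (QuotientGroup.mk t⁻¹ : G ⧸ Subgroup.zpowers x) = _
    rw [MulAction.Quotient.smul_mk, smul_eq_mul, QuotientGroup.eq]
    have e1 : x * (t * t) * t⁻¹ = x * t := by group
    have e2 : (x * t)⁻¹ * t⁻¹ = t⁻¹ * (x * t⁻¹) := by rw [mul_inv_rev, hxinv, mul_assoc]
    rw [e1, e2, hrel t⁻¹ (A.inv_mem ht), inv_inv, ← mul_assoc, inv_mul_cancel, one_mul]
    exact Subgroup.mem_zpowers x
  have hCnot : ∀ t ∈ A, x * (t * t) ∉ C := fun t ht hc => nd t ht (hCder hc)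
  -- ## product of two elements of x*A
  have mulxx : ∀ a ∈ A, ∀ b : G, (x * a) * (x * b) = a⁻¹ * b := by
    intro a ha b
    calc (x * a) * (x * b) = x * ((a * x) * b) := by group
    _ = x * ((x * a⁻¹) * b) := by rw [hrel2 a ha]
    _ = (x * x) * (a⁻¹ * b) := by group
    _ = a⁻¹ * b := by rw [hxx, one_mul]
  have tri : ∀ a ∈ A, ∀ b ∈ A, (x * b) * ((x * a) * (x * b)) = x * (a⁻¹ * (b * b)) := by
    intro a ha b hb
    have hba : b * (a⁻¹ * b) = a⁻¹ * (b * b) := by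
      rw [← mul_assoc, hcomm b hb a⁻¹ (A.inv_mem ha), mul_assoc]
    calc (x * b) * ((x * a) * (x * b)) = (x * b) * (a⁻¹ * b) := by rw [mulxx a ha b]
    _ = x * (b * (a⁻¹ * b)) := by rw [mul_assoc]
    _ = x * (a⁻¹ * (b * b)) := by rw [hba]
  -- ## the commutative group structure on A, and the square-index-two fact
  letI : Fintype (↥A) := Fintype.ofFinite _
  letI : CommGroup (↥A) :=
    { (inferInstance : Group (↥A)) with
      mul_comm := fun a b => Subtype.ext (hcomm ↑a a.2 ↑b b.2) }
  obtain ⟨a₀, ha₀A, hsign⟩ := hAodd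
  set a₀' : ↥A := ⟨a₀, ha₀A⟩ with ha₀'
  -- the equivariant equivalence A ≃ G ⧸ ⟨x⟩
  have hx2z : x ^ (2 : ℤ) = 1 := by
    rw [show (2:ℤ) = ((2:ℕ):ℤ) by norm_num, zpow_natCast, hx2]
  have hZx : ∀ g ∈ Subgroup.zpowers x, g = 1 ∨ g = x := by
    intro g hg
    obtain ⟨k, hk⟩ := Subgroup.mem_zpowers_iff.mp hg
    rcases Int.even_or_odd k with ⟨m, hm⟩ | ⟨m, hm⟩
    · left
      rw [← hk, hm, show m + m = 2 * m by ring, zpow_mul, hx2z, one_zpow]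
    · right
      rw [← hk, hm, zpow_add, zpow_mul, hx2z, one_zpow, one_mul, zpow_one]
  obtain ⟨mE, hmE⟩ : ∃ e : ↥A ≃ G ⧸ Subgroup.zpowers x,
      ∀ y : ↥A, e y = QuotientGroup.mk (y : G) := by
    refine ⟨Equiv.ofBijective (fun y => QuotientGroup.mk (y : G)) ⟨?_, ?_⟩, fun _ => rfl⟩
    · intro y z hyz
      rw [QuotientGroup.eq] at hyz
      rcases hZx _ hyz with h | h
      · exact Subtype.ext (by rw [← inv_mul_eq_one]; exact h)
      · exact absurd (h ▸ A.mul_mem (A.inv_mem y.2) z.2) hxA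
    · intro q
      induction q using QuotientGroup.induction_on with
      | H g =>
        by_cases hg : g ∈ A
        · exact ⟨⟨g, hg⟩, rfl⟩
        · refine ⟨⟨g * x, hmulAA hg hxA⟩, ?_⟩
          show QuotientGroup.mk (g * x) = QuotientGroup.mk g
          rw [QuotientGroup.eq]
          have : (g * x)⁻¹ * g = x⁻¹ := by group
          rw [this, hxinv]
          exact Subgroup.mem_zpowers x
  -- transfer the sign
  have hsign' : Equiv.Perm.sign (Equiv.mulLeft a₀' : Equiv.Perm ↥A) = -1 := by
    rw [← hsign]
    refine Equiv.Perm.sign_eq_sign_of_equiv _ _ mE ?_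
    intro y
    rw [hmE, hmE]
    show QuotientGroup.mk (((Equiv.mulLeft a₀') y : ↥A) : G) =
      (MulAction.toPermHom G (G ⧸ Subgroup.zpowers x) a₀) (QuotientGroup.mk (y : G))
    rw [MulAction.toPermHom_apply, MulAction.toPerm_apply, Equiv.coe_mulLeft,
      MulAction.Quotient.smul_mk, smul_eq_mul]
    rfl
  rw [sign_mulLeft_formula, ← pow_mul] at hsign'
  have hoddmul : Odd ((orderOf a₀' - 1) * (Subgroup.zpowers a₀').index) := by
    by_contra hcon
    rw [Nat.not_odd_iff_even] at hcon
    rw [hcon.neg_one_pow] at hsign'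
    exact absurd hsign' (by decide)
  obtain ⟨hodd1, hoddidx⟩ := Nat.odd_mul.mp hoddmul
  have heven : Even (orderOf a₀') := by
    obtain ⟨j, hj⟩ := hodd1
    exact ⟨j + 1, by omega⟩
  have L4G : ∀ u v : G, u ∈ A → v ∈ A → (¬∃ t ∈ A, t * t = u) → (¬∃ t ∈ A, t * t = v) →
      ∃ t ∈ A, t * t = u * v := by
    intro u v hu hv hnu hnv
    have hu' : ∀ t : ↥A, t * t ≠ (⟨u, hu⟩ : ↥A) := fun t ht =>
      hnu ⟨↑t, t.2, congrArg Subtype.val ht⟩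
    have hv' : ∀ t : ↥A, t * t ≠ (⟨v, hv⟩ : ↥A) := fun t ht =>
      hnv ⟨↑t, t.2, congrArg Subtype.val ht⟩
    obtain ⟨t, ht⟩ := sq_index_two a₀' hoddidx heven hu' hv'
    exact ⟨↑t, t.2, congrArg Subtype.val ht⟩
  -- ## main case distinction
  by_cases hcase : ∃ t ∈ A, t * t ≠ 1 ∧ t * t ∉ C
  · -- Case 1 : quad {1, s, x, x*s}
    obtain ⟨t, ht, hs1, hsC⟩ := hcase
    set s := t * t with hs
    have hsA : s ∈ A := A.mul_mem ht ht
    have hxsA : x * s ∉ A := hmulA' hxA hsA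
    have c23eq : s⁻¹ * x = x * s := by
      rw [hrel2 s⁻¹ (A.inv_mem hsA), inv_inv]
    have h44 : 4 ≤ indepNum (cayley G C) := by
      refine four_le_indepNum C (v₁ := 1) (v₂ := s) (v₃ := x) (v₄ := x * s)
        (Ne.symm hs1) (Ne.symm hx1) (fun h => hxsA (h ▸ A.one_mem))
        (fun h => hxA (h ▸ hsA)) (fun h => hxsA (h ▸ hsA))
        (fun h => hs1 (mul_left_cancel (a := x) (by rw [mul_one]; exact h)).symm)
        ?_ ?_ ?_ ?_ ?_ ?_
      · simpa using hsC
      · simpa using hCnot 1 A.one_mem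
      · simpa using hCnot t ht
      · rw [c23eq, hs]; exact hCnot t ht
      · have : s⁻¹ * (x * s) = x * (s * s) := by rw [← mul_assoc, c23eq, mul_assoc]
        rw [this]; exact hCnot s hsA
      · have : x⁻¹ * (x * s) = s := by rw [hxinv, ← mul_assoc, hxx, one_mul]
        rw [this]; exact hsC
    omega
  · -- Case 2 : all nontrivial squares are in C
    push_neg at hcase
    have NS : ∀ r : G, r ∈ A → r ∉ C → r ≠ 1 → ¬∃ t ∈ A, t * t = r := by
      rintro r hrA hrC hr1 ⟨t, ht, rfl⟩
      exact hrC (hcase t ht hr1)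
    obtain ⟨g, h, k, hgh, hgk, hhk, nAgh, nAgk, nAhk⟩ := exists_indep_triple C h2
    have diffC : ∀ {u w : G}, ¬ (cayley G C).Adj u w → u ≠ w → u⁻¹ * w ∉ C := by
      intro u w hn hne hc
      refine hn ⟨hne, hc, ?_⟩
      rw [show w⁻¹ * u = (u⁻¹ * w)⁻¹ by group]
      exact hCinv _ hc
    have d1C : g⁻¹ * h ∉ C := diffC nAgh hgh
    have d2C : g⁻¹ * k ∉ C := diffC nAgk hgk
    have d3C : h⁻¹ * k ∉ C := diffC nAhk hhk
    have dinv : ∀ {d : G}, d ∉ C → d⁻¹ ∉ C := fun hd hc => hd (by simpa using hCinv _ hc)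
    -- the key scenario : triple {w, u, v} with w⁻¹u, w⁻¹v ∉ A
    have key : ∀ w u v : G, w ≠ u → w ≠ v → u ≠ v →
        w⁻¹ * u ∉ A → w⁻¹ * v ∉ A → w⁻¹ * u ∉ C → w⁻¹ * v ∉ C → u⁻¹ * v ∉ C → False := by
      intro w u v hwu hwv huv hpA hqA hpC hqC hrC
      set p := w⁻¹ * u with hp
      set q := w⁻¹ * v with hq
      set r := u⁻¹ * v with hr
      have hrpq : r = p⁻¹ * q := by rw [hp, hq, hr]; group
      have hrA : r ∈ A := by rw [hrpq]; exact hmulAA (hinvA hpA) hqA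
      have hr1 : r ≠ 1 := fun h0 => huv (inv_mul_eq_one.mp h0)
      have hrNS : ¬∃ t ∈ A, t * t = r := NS r hrA hrC hr1
      have hpp : p * p = 1 := hinvol p hpA
      have hqq : q * q = 1 := hinvol q hqA
      have hpinv : p⁻¹ = p := by rw [inv_eq_iff_mul_eq_one]; exact hpp
      have hqinv : q⁻¹ = q := by rw [inv_eq_iff_mul_eq_one]; exact hqq
      set a := x * p with ha
      set b := x * q with hb
      have haA : a ∈ A := hmulAA hxA hpA
      have hbA : b ∈ A := hmulAA hxA hqA
      have hpxa : p = x * a := by rw [ha, ← mul_assoc, hxx, one_mul]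
      have hqxb : q = x * b := by rw [hb, ← mul_assoc, hxx, one_mul]
      have hrab : r = a⁻¹ * b := by
        rw [hrpq, hpinv, hpxa, hqxb, mulxx a haA b]
      have huw : u⁻¹ * w = p := by rw [← hpinv, hp, mul_inv_rev, inv_inv]
      have hvw : v⁻¹ * w = q := by rw [← hqinv, hq, mul_inv_rev, inv_inv]
      by_cases hNa : ∃ t ∈ A, t * t = a
      · -- quad {w, u, v, w * r}
        obtain ⟨t, ht, hta⟩ := hNa
        have hcm : b * t⁻¹ = t⁻¹ * b := hcomm b hbA t⁻¹ (A.inv_mem ht)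
        have husq : a⁻¹ * (b * b) = (t⁻¹ * b) * (t⁻¹ * b) := by
          rw [← hta, mul_inv_rev]
          calc t⁻¹ * t⁻¹ * (b * b) = t⁻¹ * (t⁻¹ * b) * b := by group
          _ = t⁻¹ * (b * t⁻¹) * b := by rw [hcm]
          _ = (t⁻¹ * b) * (t⁻¹ * b) := by group
        have h44 : 4 ≤ indepNum (cayley G C) := by
          refine four_le_indepNum C (v₁ := w) (v₂ := u) (v₃ := v) (v₄ := w * r)
            hwu hwv
            (fun h0 => hr1 (mul_left_cancel (a := w) (by rw [mul_one]; exact h0)).symm)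
            huv
            (fun h0 => hpA (by rw [hp, h0, inv_mul_cancel_left]; exact hrA))
            (fun h0 => hqA (by rw [hq, h0, inv_mul_cancel_left]; exact hrA))
            ?_ ?_ ?_ ?_ ?_ ?_
          · exact hpC
          · exact hqC
          · rw [inv_mul_cancel_left]; exact hrC
          · exact hrC
          · have e : u⁻¹ * (w * r) = q := by
              rw [← mul_assoc, huw, hrpq, mul_inv_cancel_left]
            rw [e]; exact hqC
          · have e : v⁻¹ * (w * r) = x * (a⁻¹ * (b * b)) := by
              rw [← mul_assoc, hvw, hrpq, hpinv, hpxa, hqxb, tri a haA b hbA]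
            rw [e, husq]
            exact hCnot (t⁻¹ * b) (A.mul_mem (A.inv_mem ht) hbA)
        omega
      by_cases hNb : ∃ t ∈ A, t * t = b
      · -- quad {w, u, v, w * r⁻¹}
        obtain ⟨t, ht, htb⟩ := hNb
        have hcm : a * t⁻¹ = t⁻¹ * a := hcomm a haA t⁻¹ (A.inv_mem ht)
        have husq : b⁻¹ * (a * a) = (t⁻¹ * a) * (t⁻¹ * a) := by
          rw [← htb, mul_inv_rev]
          calc t⁻¹ * t⁻¹ * (a * a) = t⁻¹ * (t⁻¹ * a) * a := by group
          _ = t⁻¹ * (a * t⁻¹) * a := by rw [hcm]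
          _ = (t⁻¹ * a) * (t⁻¹ * a) := by group
        have hrinv : r⁻¹ = q * p := by rw [hrpq, mul_inv_rev, inv_inv, hqinv]
        have h44 : 4 ≤ indepNum (cayley G C) := by
          refine four_le_indepNum C (v₁ := w) (v₂ := u) (v₃ := v) (v₄ := w * r⁻¹)
            hwu hwv
            (fun h0 => hr1 (inv_eq_one.mp
              (mul_left_cancel (a := w) (by rw [mul_one]; exact h0)).symm))
            huv
            (fun h0 => hpA (by rw [hp, h0, inv_mul_cancel_left]; exact A.inv_mem hrA))
            (fun h0 => hqA (by rw [hq, h0, inv_mul_cancel_left]; exact A.inv_mem hrA))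
            ?_ ?_ ?_ ?_ ?_ ?_
          · exact hpC
          · exact hqC
          · rw [inv_mul_cancel_left]; exact dinv hrC
          · exact hrC
          · have e : u⁻¹ * (w * r⁻¹) = x * (b⁻¹ * (a * a)) := by
              rw [← mul_assoc, huw, hrinv, hpxa, hqxb, tri b hbA a haA]
            rw [e, husq]
            exact hCnot (t⁻¹ * a) (A.mul_mem (A.inv_mem ht) haA)
          · have e : v⁻¹ * (w * r⁻¹) = p := by
              rw [← mul_assoc, hvw, hrinv, ← mul_assoc, hqq, one_mul]
            rw [e]; exact hpC
        omega
      · -- neither square : contradiction with L4G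
        have hNa' : ¬∃ t ∈ A, t * t = a⁻¹ := fun ⟨t, ht, htt⟩ =>
          hNa ⟨t⁻¹, A.inv_mem ht, by rw [← mul_inv_rev, htt, inv_inv]⟩
        obtain ⟨t, ht, htt⟩ := L4G a⁻¹ b (A.inv_mem haA) hbA hNa' hNb
        exact hrNS ⟨t, ht, by rw [htt, ← hrab]⟩
    -- choose the scenario
    set d1 := g⁻¹ * h with hd1
    set d2 := g⁻¹ * k with hd2
    have hd3 : h⁻¹ * k = d1⁻¹ * d2 := by rw [hd1, hd2]; group
    by_cases h1A : d1 ∈ A <;> by_cases h2A : d2 ∈ A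
    · -- both in A : impossible
      have h3A : h⁻¹ * k ∈ A := by rw [hd3]; exact A.mul_mem (A.inv_mem h1A) h2A
      have hd11 : d1 ≠ 1 := fun h0 => hgh (inv_mul_eq_one.mp h0)
      have hd21 : d2 ≠ 1 := fun h0 => hgk (inv_mul_eq_one.mp h0)
      have hd31 : h⁻¹ * k ≠ 1 := fun h0 => hhk (inv_mul_eq_one.mp h0)
      have NS1 : ¬∃ t ∈ A, t * t = d1 := NS _ h1A d1C hd11
      have NS2 : ¬∃ t ∈ A, t * t = d2 := NS _ h2A d2C hd21
      have NS3 : ¬∃ t ∈ A, t * t = h⁻¹ * k := NS _ h3A d3C hd31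
      have NS1' : ¬∃ t ∈ A, t * t = d1⁻¹ := fun ⟨t, ht, htt⟩ =>
        NS1 ⟨t⁻¹, A.inv_mem ht, by rw [← mul_inv_rev, htt, inv_inv]⟩
      obtain ⟨t, ht, htt⟩ := L4G d1⁻¹ d2 (A.inv_mem h1A) h2A NS1' NS2
      exact NS3 ⟨t, ht, by rw [htt, ← hd3]⟩
    · -- d1 ∈ A, d2 ∉ A : base k
      have e1 : k⁻¹ * g = d2⁻¹ := by rw [hd2, mul_inv_rev, inv_inv]
      have e2 : k⁻¹ * h = (h⁻¹ * k)⁻¹ := by rw [mul_inv_rev, inv_inv]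
      refine key k g h hgk.symm hhk.symm hgh ?_ ?_ ?_ ?_ d1C
      · rw [e1]; exact hinvA h2A
      · rw [e2, hd3, mul_inv_rev, inv_inv]
        exact hmulA' (hinvA h2A) h1A
      · rw [e1]; exact dinv d2C
      · rw [e2]; exact dinv d3C
    · -- d1 ∉ A, d2 ∈ A : base h
      refine key h g k hgh.symm hhk hgk ?_ ?_ ?_ ?_ d2C
      · rw [show h⁻¹ * g = d1⁻¹ by rw [hd1, mul_inv_rev, inv_inv]]; exact hinvA h1A
      · rw [hd3]; exact hmulA' (hinvA h1A) h2A
      · rw [show h⁻¹ * g = d1⁻¹ by rw [hd1, mul_inv_rev, inv_inv]]; exact dinv d1C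
      · exact d3C
    · -- d1 ∉ A, d2 ∉ A : base g
      refine key g h k hgh hgk hhk h1A h2A d1C d2C ?_
      exact d3C
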